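/- If μ is a greedy-optimal matching schedule for additive valuations with item values in [0,1], then the output allocation of μ is EF1. -/

import Mathlib

/-- If μ is a greedy-optimal matching schedule for additive valuations
with item values in [0,1], then the output allocation of μ is EF1. -/
theorem greedy_schedule_EF1
    (n T m : ℕ) (hn : 1 ≤ n) (hT : 1 ≤ T) (hm : m = n * T)
    (v : Fin n → Fin m → ℝ)
    (hv0 : ∀ i j, 0 ≤ v i j) (hv1 : ∀ i j, v i j ≤ 1)
    (μ : Fin T → Fin n → Fin m)
    (hμ : Function.Bijective (fun q : Fin T × Fin n => μ q.1 q.2))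
    (hgreedy : ∀ t : Fin T, ∀ σ : Fin n → Fin m, Function.Injective σ →
      (∀ i, σ i ∈ Finset.univ.filter
        (fun j => ∀ s : Fin T, (s : ℕ) < (t : ℕ) → ∀ i' : Fin n, μ s i' ≠ j)) →
      (∑ i, v i (σ i)) ≤ ∑ i, v i (μ t i)) :
    ∀ i k : Fin n,
      (Finset.univ.image (fun t => μ t k)) = ∅ ∨
      ∃ j ∈ Finset.univ.image (fun t => μ t k),
        (∑ j' ∈ Finset.univ.image (fun t => μ t i), v i j') ≥
        ∑ j' ∈ (Finset.univ.image (fun t => μ t k)).erase j, v i j' := by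
  intro i k
  right
  have hinj : ∀ (t s : Fin T) (a b : Fin n), μ t a = μ s b → t = s ∧ a = b := by
    intro t s a b h
    have : ((t, a) : Fin T × Fin n) = (s, b) := hμ.1 h
    exact ⟨congrArg Prod.fst this, congrArg Prod.snd this⟩
  have h0 : (0 : ℕ) < T := hT
  set t0 : Fin T := ⟨0, h0⟩ with ht0
  refine ⟨μ t0 k, Finset.mem_image_of_mem _ (Finset.mem_univ t0), ?_⟩
  -- key: value (for agent i) of k's item in round s = t+1 is at most i's item in round t
  have key : ∀ (t s : Fin T), (s : ℕ) = (t : ℕ) + 1 → v i (μ s k) ≤ v i (μ t i) := by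
    intro t s hs
    have hts : t ≠ s := by
      intro h; rw [h] at hs; omega
    set σ : Fin n → Fin m := Function.update (fun i' => μ t i') i (μ s k) with hσ
    have hσinj : Function.Injective σ := by
      intro a b hab
      by_cases ha : a = i <;> by_cases hb : b = i
      · rw [ha, hb]
      · subst ha
        simp only [σ, Function.update_apply, hb, if_pos rfl, if_neg hb] at hab
        simp at hab
        exact absurd ((hinj s t k b hab).1.symm) hts
      · subst hb
        simp only [σ, Function.update_apply, ha, if_neg ha] at hab
        simp at hab
        exact absurd (hinj t s a k hab).1 hts
      · simp only [σ, Function.update_apply, if_neg ha, if_neg hb] at hab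
        exact (hinj t t a b hab).2
    have hmem : ∀ i', σ i' ∈ Finset.univ.filter
        (fun j => ∀ s' : Fin T, (s' : ℕ) < (t : ℕ) → ∀ i'' : Fin n, μ s' i'' ≠ j) := by
      intro i'
      simp only [Finset.mem_filter, Finset.mem_univ, true_and]
      intro s' hs' i'' hne
      by_cases hi' : i' = i
      · subst hi'
        simp only [σ, Function.update_apply, if_pos rfl] at hne
        have := (hinj s' s i'' k hne).1
        subst this
        omega
      · simp only [σ, Function.update_apply, if_neg hi'] at hne
        have := (hinj s' t i'' i' hne).1
        subst this
        omega
    have hle := hgreedy t σ hσinj hmem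
    have hsum : ∑ i', v i' (σ i')
        = v i (μ s k) + ∑ i' ∈ Finset.univ.erase i, v i' (μ t i') := by
      rw [← Finset.add_sum_erase _ (fun i' => v i' (σ i')) (Finset.mem_univ i)]
      congr 1
      · rw [hσ]; simp
      · exact Finset.sum_congr rfl (fun x hx => by
          rw [hσ, Function.update_apply, if_neg (Finset.ne_of_mem_erase hx)])
    have hsum2 : ∑ i', v i' (μ t i')
        = v i (μ t i) + ∑ i' ∈ Finset.univ.erase i, v i' (μ t i') :=
      (Finset.add_sum_erase _ _ (Finset.mem_univ i)).symm
    rw [hsum, hsum2] at hle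
    linarith
  have hinjk : ∀ a ∈ Finset.univ, ∀ b ∈ Finset.univ, μ a k = μ b k → a = b := by
    intro a _ b _ h; exact (hinj a b k k h).1
  have hinji : ∀ a ∈ Finset.univ, ∀ b ∈ Finset.univ, μ a i = μ b i → a = b := by
    intro a _ b _ h; exact (hinj a b i i h).1
  have himg_i : ∑ j' ∈ Finset.univ.image (fun t => μ t i), v i j'
      = ∑ t : Fin T, v i (μ t i) := Finset.sum_image hinji
  have himg_k : ∑ j' ∈ Finset.univ.image (fun t => μ t k), v i j'
      = ∑ t : Fin T, v i (μ t k) := Finset.sum_image hinjk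
  have herase : ∑ j' ∈ (Finset.univ.image (fun t => μ t k)).erase (μ t0 k), v i j'
      + v i (μ t0 k) = ∑ j' ∈ Finset.univ.image (fun t => μ t k), v i j' :=
    Finset.sum_erase_add _ _ (Finset.mem_image_of_mem _ (Finset.mem_univ t0))
  -- reduce to: ∑ t, v i (μ t k) ≤ v i (μ t0 k) + ∑ t, v i (μ t i)
  rw [ge_iff_le, himg_i]
  have main : ∑ t : Fin T, v i (μ t k) ≤ v i (μ t0 k) + ∑ t : Fin T, v i (μ t i) := by
    set fk : ℕ → ℝ := fun t => if h : t < T then v i (μ ⟨t, h⟩ k) else 0 with hfk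
    set fi : ℕ → ℝ := fun t => if h : t < T then v i (μ ⟨t, h⟩ i) else 0 with hfi
    have e1 : ∑ t : Fin T, v i (μ t k) = ∑ t ∈ Finset.range T, fk t := by
      rw [← Fin.sum_univ_eq_sum_range]
      exact Finset.sum_congr rfl (fun t _ => by simp [hfk, t.isLt])
    have e2 : ∑ t : Fin T, v i (μ t i) = ∑ t ∈ Finset.range T, fi t := by
      rw [← Fin.sum_univ_eq_sum_range]
      exact Finset.sum_congr rfl (fun t _ => by simp [hfi, t.isLt])
    obtain ⟨N, rfl⟩ : ∃ N, T = N + 1 := ⟨T - 1, by omega⟩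
    rw [e1, e2, Finset.sum_range_succ', Finset.sum_range_succ]
    have hk0 : fk 0 = v i (μ t0 k) := by simp [hfk, ht0, h0]
    have hstep : ∑ t ∈ Finset.range N, fk (t + 1) ≤ ∑ t ∈ Finset.range N, fi t := by
      apply Finset.sum_le_sum
      intro t ht
      have ht' : t < N := Finset.mem_range.mp ht
      have h1 : t < N + 1 := by omega
      have h2 : t + 1 < N + 1 := by omega
      have := key ⟨t, h1⟩ ⟨t + 1, h2⟩ rfl
      simpa [hfk, hfi, h1, h2, ht', ht'.le] using this
    have hN : 0 ≤ fi N := by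
      have hN' : N < N + 1 := by omega
      simp only [hfi, dif_pos hN']
      exact hv0 _ _
    linarith
  linarith [herase, himg_k]
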